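/- arXiv:0805.1226 — 2 statements merged into one kernel-verified Lean document; each statement's English description precedes it below -/
import Mathlib

section
/- For real numbers a and b > 0 and R > 0, the integral identity (2/R²)·∫₀^R Q(a + b·ln(r/R))·r dr = Q(a) + exp((2 - 2ab)/b²)·Q((2 - ab)/b) holds, where Q(x) = (1/√(2π))·∫_x^∞ e^{-t²/2} dt is the Gaussian tail function. -/
open MeasureTheory

/-- The Gaussian tail function `Q(x) = (1/√(2π)) ∫_x^∞ e^{-t²/2} dt`. -/
noncomputable def gaussQ (x : ℝ) : ℝ :=
  (1 / Real.sqrt (2 * Real.pi)) * ∫ t in Set.Ioi x, Real.exp (-t ^ 2 / 2)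

open Real Set

lemma gauss_integrable : Integrable (fun t : ℝ => Real.exp (-t ^ 2 / 2)) := by
  have h := integrable_exp_neg_mul_sq (b := (1:ℝ)/2) (by norm_num)
  convert h using 2 with t
  ring_nf

lemma gauss_total : ∫ t : ℝ, Real.exp (-t ^ 2 / 2) = Real.sqrt (2 * Real.pi) := by
  have h := integral_gaussian ((1:ℝ)/2)
  rw [show π / ((1:ℝ)/2) = 2 * π by ring] at h
  rw [← h]
  congr 1 with t
  ring_nf

lemma sqrt2pi_pos : 0 < Real.sqrt (2 * Real.pi) := Real.sqrt_pos.2 (by positivity)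

lemma gaussQ_eq (x : ℝ) : gaussQ x =
    1 - (1 / Real.sqrt (2 * Real.pi)) * ∫ t in Iic x, Real.exp (-t ^ 2 / 2) := by
  have h := intervalIntegral.integral_Iic_add_Ioi (f := fun t : ℝ => Real.exp (-t ^ 2 / 2)) (b := x)
    gauss_integrable.integrableOn gauss_integrable.integrableOn
  rw [gauss_total] at h
  rw [gaussQ, show (∫ t in Ioi x, Real.exp (-t ^ 2 / 2)) =
    Real.sqrt (2 * Real.pi) - ∫ t in Iic x, Real.exp (-t ^ 2 / 2) from by linarith]
  have hs := sqrt2pi_pos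
  field_simp

lemma gaussQ_nonneg (x : ℝ) : 0 ≤ gaussQ x := by
  apply mul_nonneg (by positivity)
  apply integral_nonneg
  intro t; positivity

lemma Iic_int_nonneg (x : ℝ) : 0 ≤ ∫ t in Iic x, Real.exp (-t ^ 2 / 2) := by
  apply integral_nonneg; intro t; positivity

lemma gaussQ_le_one (x : ℝ) : gaussQ x ≤ 1 := by
  rw [gaussQ_eq]
  have h0 : 0 ≤ (1 / Real.sqrt (2 * Real.pi)) * ∫ t in Iic x, Real.exp (-t ^ 2 / 2) :=
    mul_nonneg (by positivity) (Iic_int_nonneg x)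
  linarith

lemma gauss_cont : Continuous (fun t : ℝ => Real.exp (-t ^ 2 / 2)) := by continuity

lemma gaussQ_hasDerivAt (x : ℝ) :
    HasDerivAt gaussQ (-(1 / Real.sqrt (2 * Real.pi) * Real.exp (-x ^ 2 / 2))) x := by
  have h1 : gaussQ = fun u : ℝ => 1 - (1 / Real.sqrt (2 * Real.pi)) *
      ((∫ t in Iic (0:ℝ), Real.exp (-t ^ 2 / 2)) + ∫ t in (0:ℝ)..u, Real.exp (-t ^ 2 / 2)) := by
    funext u
    rw [gaussQ_eq]
    have h2 := intervalIntegral.integral_Iic_sub_Iic (f := fun t : ℝ => Real.exp (-t ^ 2 / 2))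
      (μ := volume) (a := (0:ℝ)) (b := u) gauss_integrable.integrableOn gauss_integrable.integrableOn
    rw [← h2]
    ring
  rw [h1]
  have hd : HasDerivAt (fun u : ℝ => ∫ t in (0:ℝ)..u, Real.exp (-t ^ 2 / 2))
      (Real.exp (-x ^ 2 / 2)) x :=
    intervalIntegral.integral_hasDerivAt_right gauss_integrable.intervalIntegrable
      gauss_cont.aestronglyMeasurable.stronglyMeasurableAtFilter gauss_cont.continuousAt
  have h3 := ((hd.const_add (∫ t in Iic (0:ℝ), Real.exp (-t ^ 2 / 2))).const_mul
      (1 / Real.sqrt (2 * Real.pi))).const_sub 1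
  convert h3 using 1

lemma gaussQ_continuous : Continuous gaussQ :=
  continuous_iff_continuousAt.2 fun x => (gaussQ_hasDerivAt x).continuousAt

lemma gaussQ_neg (x : ℝ) : gaussQ (-x) = 1 - gaussQ x := by
  have h := integral_comp_neg_Iic (-x) (fun t : ℝ => Real.exp (-t ^ 2 / 2))
  simp only [neg_neg, neg_sq] at h
  rw [gaussQ_eq (-x), h, gaussQ]

open Filter in
lemma Iic_int_tendsto :
    Tendsto (fun y : ℝ => ∫ t in Iic y, Real.exp (-t ^ 2 / 2)) atBot (nhds 0) := by
  apply tendsto_of_tendsto_of_tendsto_of_le_of_le' tendsto_const_nhds Real.tendsto_exp_atBot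
  · exact Eventually.of_forall fun y => Iic_int_nonneg y
  · filter_upwards [eventually_le_atBot (-2 : ℝ)] with y hy
    calc (∫ t in Iic y, Real.exp (-t ^ 2 / 2)) ≤ ∫ t in Iic y, Real.exp t := by
          apply setIntegral_mono_on gauss_integrable.integrableOn (integrableOn_exp_Iic y)
            measurableSet_Iic
          intro t ht
          have ht2 : t ≤ -2 := le_trans ht hy
          apply Real.exp_le_exp.2
          nlinarith
      _ = Real.exp y := integral_exp_Iic y

open Filter in
lemma gaussQ_tendsto_atBot : Tendsto gaussQ atBot (nhds 1) := by
  have h := (tendsto_const_nhds (x := (1:ℝ)) (f := atBot (α := ℝ))).sub ((Iic_int_tendsto).const_mul (1 / Real.sqrt (2 * Real.pi)))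
  simp only [mul_zero, sub_zero] at h
  have : (fun y : ℝ => (1:ℝ) - (1 / Real.sqrt (2 * Real.pi)) *
      ∫ t in Iic y, Real.exp (-t ^ 2 / 2)) = gaussQ := by
    funext y; rw [gaussQ_eq]
  rwa [this] at h

open Filter in
/-- The disk-averaged coverage integral identity:
`(2/R²) ∫₀^R Q(a + b ln(r/R)) r dr = Q(a) + exp((2-2ab)/b²) Q((2-ab)/b)`. -/
theorem stmt_4 (a b R : ℝ) (hb : 0 < b) (hR : 0 < R) :
    (2 / R ^ 2) * ∫ r in (0 : ℝ)..R, gaussQ (a + b * Real.log (r / R)) * r =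
      gaussQ a + Real.exp ((2 - 2 * a * b) / b ^ 2) * gaussQ ((2 - a * b) / b) := by
  set K : ℝ := (2 - 2 * a * b) / b ^ 2 with hK
  set f : ℝ → ℝ := fun r => gaussQ (a + b * Real.log (r / R)) * r with hf
  set g : ℝ → ℝ := fun r => r ^ 2 / 2 * gaussQ (a + b * Real.log (r / R)) +
      R ^ 2 / 2 * Real.exp K * (1 - gaussQ (a + b * Real.log (r / R) - 2 / b)) with hg
  set G : ℝ → ℝ := fun r => if r ≤ 0 then 0 else g r with hG
  -- continuity of g on (0, ∞)
  have hgc : ∀ r : ℝ, 0 < r → ContinuousAt g r := by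
    intro r hr
    have hlog : ContinuousAt (fun r : ℝ => a + b * Real.log (r / R)) r :=
      continuousAt_const.add (continuousAt_const.mul
        ((Real.continuousAt_log (by positivity)).comp ((continuousAt_id.div_const R))))
    exact ((continuousAt_id.pow 2).div_const 2 |>.mul (gaussQ_continuous.continuousAt.comp hlog)
      ).add (continuousAt_const.mul (continuousAt_const.sub
        (gaussQ_continuous.continuousAt.comp (hlog.sub continuousAt_const))))
  -- g tends to 0 from the right at 0
  have hg0 : Tendsto g (nhdsWithin 0 (Ioi 0)) (nhds 0) := by
    have hlogtop : Tendsto (fun r : ℝ => a + b * Real.log (r / R) - 2 / b)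
        (nhdsWithin 0 (Ioi 0)) atBot := by
      have h1 : Tendsto (fun r : ℝ => r / R) (nhdsWithin 0 (Ioi 0)) (nhdsWithin 0 (Ioi 0)) := by
        apply tendsto_nhdsWithin_of_tendsto_nhds_of_eventually_within
        · have h0 : Tendsto (fun r : ℝ => r / R) (nhds (0:ℝ)) (nhds ((0:ℝ) / R)) :=
            tendsto_id.div_const R
          rw [zero_div] at h0
          exact h0.mono_left nhdsWithin_le_nhds
        · filter_upwards [self_mem_nhdsWithin] with x hx
          exact div_pos hx hR
      have h2 : Tendsto (fun r : ℝ => Real.log (r / R)) (nhdsWithin 0 (Ioi 0)) atBot :=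
        Real.tendsto_log_nhdsGT_zero.comp h1
      have h3 := (h2.const_mul_atBot hb)
      exact tendsto_atBot_add_const_right _ _ (tendsto_atBot_add_const_left _ _ h3)
    have ht2 : Tendsto (fun r : ℝ => R ^ 2 / 2 * Real.exp K *
        (1 - gaussQ (a + b * Real.log (r / R) - 2 / b))) (nhdsWithin 0 (Ioi 0))
        (nhds (R ^ 2 / 2 * Real.exp K * (1 - 1))) :=
      tendsto_const_nhds.mul (tendsto_const_nhds.sub (gaussQ_tendsto_atBot.comp hlogtop))
    have ht1 : Tendsto (fun r : ℝ => r ^ 2 / 2 * gaussQ (a + b * Real.log (r / R)))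
        (nhdsWithin 0 (Ioi 0)) (nhds 0) := by
      have hup : Tendsto (fun r : ℝ => r ^ 2 / 2) (nhdsWithin (0:ℝ) (Ioi 0)) (nhds 0) := by
        have h0 : Tendsto (fun r : ℝ => r ^ 2 / 2) (nhds (0:ℝ)) (nhds ((0:ℝ) ^ 2 / 2)) :=
          ((continuous_pow 2).div_const 2).tendsto 0
        norm_num at h0
        exact h0.mono_left nhdsWithin_le_nhds
      refine squeeze_zero' (Eventually.of_forall fun r =>
        mul_nonneg (by positivity) (gaussQ_nonneg _))
        (Eventually.of_forall fun r => ?_) hup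
      calc r ^ 2 / 2 * gaussQ (a + b * Real.log (r / R)) ≤ r ^ 2 / 2 * 1 :=
            mul_le_mul_of_nonneg_left (gaussQ_le_one _) (by positivity)
        _ = r ^ 2 / 2 := mul_one _
    have := ht1.add ht2
    simpa using this
  -- G is continuous on [0, R]
  have hGc : ContinuousOn G (Icc 0 R) := by
    intro x hx
    rcases eq_or_lt_of_le hx.1 with h0 | h0
    · -- x = 0
      subst h0
      have hval : G 0 = 0 := by simp [hG]
      rw [ContinuousWithinAt, hval]
      have hsub : nhdsWithin (0:ℝ) (Icc 0 R) ≤ nhdsWithin 0 ({0} ∪ Ioi 0) := by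
        apply nhdsWithin_mono
        intro y hy
        rcases eq_or_lt_of_le hy.1 with h | h
        · exact Or.inl h.symm
        · exact Or.inr h
      apply Tendsto.mono_left _ hsub
      rw [nhdsWithin_union]
      apply Tendsto.sup
      · simp only [nhdsWithin_singleton]
        rw [tendsto_pure_left]
        intro s hs
        simpa [hG] using mem_of_mem_nhds hs
      · have hEq : G =ᶠ[nhdsWithin (0:ℝ) (Ioi 0)] g := by
          filter_upwards [self_mem_nhdsWithin] with y hy
          simp [hG, not_le.2 (show 0 < y from hy)]
        exact hg0.congr' hEq.symm
    · -- x > 0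
      have : ContinuousAt G x := by
        have hEq : G =ᶠ[nhds x] g := by
          filter_upwards [IsOpen.mem_nhds isOpen_Ioi h0] with y hy
          simp [hG, not_le.2 (show 0 < y from hy)]
        exact ContinuousAt.congr (hgc x h0) hEq.symm
      exact this.continuousWithinAt
  -- derivative of g
  have hgd : ∀ r : ℝ, 0 < r → HasDerivAt g (f r) r := by
    intro r hr
    have hx : HasDerivAt (fun r : ℝ => a + b * Real.log (r / R)) (b / r) r := by
      have h1 : HasDerivAt (fun r : ℝ => a + b * (Real.log r - Real.log R)) (b * (1/r)) r := by
        simpa using (((Real.hasDerivAt_log (ne_of_gt hr)).sub_const (Real.log R)).const_mul b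
          ).const_add a
      have h2 : (fun r : ℝ => a + b * (Real.log r - Real.log R)) =ᶠ[nhds r]
          (fun r : ℝ => a + b * Real.log (r / R)) := by
        filter_upwards [IsOpen.mem_nhds isOpen_Ioi hr] with y hy
        rw [Real.log_div (ne_of_gt hy) (ne_of_gt hR)]
      have := h1.congr_of_eventuallyEq h2.symm
      rw [mul_one_div] at this
      exact this
    set x : ℝ := a + b * Real.log (r / R) with hxdef
    have hQ1 : HasDerivAt (fun r : ℝ => gaussQ (a + b * Real.log (r / R)))
        (-(1 / Real.sqrt (2 * Real.pi) * Real.exp (-x ^ 2 / 2)) * (b / r)) r :=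
      HasDerivAt.comp (h₂ := gaussQ) (h := fun r : ℝ => a + b * Real.log (r / R)) r (gaussQ_hasDerivAt x) hx
    have hQ2 : HasDerivAt (fun r : ℝ => gaussQ (a + b * Real.log (r / R) - 2 / b))
        (-(1 / Real.sqrt (2 * Real.pi) * Real.exp (-(x - 2/b) ^ 2 / 2)) * (b / r)) r :=
      HasDerivAt.comp (h₂ := gaussQ) (h := fun r : ℝ => a + b * Real.log (r / R) - 2 / b) r (gaussQ_hasDerivAt (x - 2/b)) (hx.sub_const (2/b))
    have hsq : HasDerivAt (fun r : ℝ => r ^ 2 / 2) r r := by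
      have := (hasDerivAt_pow 2 r).div_const 2
      simpa using this
    have hd : HasDerivAt g (r * gaussQ x + r ^ 2 / 2 *
        (-(1 / Real.sqrt (2 * Real.pi) * Real.exp (-x ^ 2 / 2)) * (b / r)) +
        R ^ 2 / 2 * Real.exp K *
        (0 - -(1 / Real.sqrt (2 * Real.pi) * Real.exp (-(x - 2/b) ^ 2 / 2)) * (b / r))) r := by
      exact (hsq.mul hQ1).add ((((hasDerivAt_const r (1:ℝ)).sub hQ2)).const_mul _)
    -- key algebraic identity
    have hkey : R ^ 2 * Real.exp (K - (x - 2/b) ^ 2 / 2) = r ^ 2 * Real.exp (-x ^ 2 / 2) := by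
      have hexp : K - (x - 2/b) ^ 2 / 2 = 2 * Real.log (r / R) + (-x ^ 2 / 2) := by
        rw [hxdef, hK]
        field_simp
        ring
      rw [hexp, Real.exp_add, show (2 : ℝ) * Real.log (r / R) =
        Real.log (r/R) + Real.log (r/R) by ring, Real.exp_add,
        Real.exp_log (div_pos hr hR)]
      field_simp
    have hfr : f r = r * gaussQ x + r ^ 2 / 2 *
        (-(1 / Real.sqrt (2 * Real.pi) * Real.exp (-x ^ 2 / 2)) * (b / r)) +
        R ^ 2 / 2 * Real.exp K *
        (0 - -(1 / Real.sqrt (2 * Real.pi) * Real.exp (-(x - 2/b) ^ 2 / 2)) * (b / r)) := by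
      have h1 : R ^ 2 * (Real.exp K * Real.exp (-(x - 2/b) ^ 2 / 2)) =
          r ^ 2 * Real.exp (-x ^ 2 / 2) := by
        rw [← Real.exp_add, show K + -(x - 2/b) ^ 2 / 2 = K - (x - 2/b) ^ 2 / 2 by ring]
        exact hkey
      simp only [hf, ← hxdef]
      set c : ℝ := 1 / Real.sqrt (2 * Real.pi) with hc
      set E1 : ℝ := Real.exp (-x ^ 2 / 2) with hE1
      set E2 : ℝ := Real.exp (-(x - 2/b) ^ 2 / 2) with hE2
      set EK : ℝ := Real.exp K with hEK
      field_simp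
      linear_combination (-(b * (Real.sqrt (2 * Real.pi))⁻¹)) * h1
    rw [hfr]
    exact hd
  -- FTC
  have hfc : ContinuousOn f (Icc 0 R) := by
    intro y hy
    rcases eq_or_lt_of_le hy.1 with h0 | h0
    · subst h0
      rw [ContinuousWithinAt, show f 0 = 0 by simp [hf]]
      apply squeeze_zero' (g := fun r => r)
      · filter_upwards [self_mem_nhdsWithin] with z hz
        exact mul_nonneg (gaussQ_nonneg _) hz.1
      · filter_upwards [self_mem_nhdsWithin] with z hz
        calc gaussQ (a + b * Real.log (z / R)) * z ≤ 1 * z :=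
            mul_le_mul_of_nonneg_right (gaussQ_le_one _) hz.1
          _ = z := one_mul z
      · exact (continuous_id.tendsto 0).mono_left nhdsWithin_le_nhds
    · have hlog : ContinuousAt (fun r : ℝ => a + b * Real.log (r / R)) y :=
        continuousAt_const.add (continuousAt_const.mul
          ((Real.continuousAt_log (by positivity)).comp ((continuousAt_id.div_const R))))
      exact ((gaussQ_continuous.continuousAt.comp hlog).mul continuousAt_id).continuousWithinAt
  have hfint : IntervalIntegrable f volume 0 R := by
    apply ContinuousOn.intervalIntegrable
    rwa [uIcc_of_le hR.le]
  have hftc := intervalIntegral.integral_eq_sub_of_hasDeriv_right_of_le hR.le hGc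
    (fun y hy => ((hgd y hy.1).congr_of_eventuallyEq (by
      filter_upwards [IsOpen.mem_nhds isOpen_Ioi hy.1] with z hz
      simp [hG, not_le.2 (show 0 < z from hz)])).hasDerivWithinAt) hfint
  rw [hftc]
  have hGR : G R = R ^ 2 / 2 * gaussQ a +
      R ^ 2 / 2 * Real.exp K * (1 - gaussQ (a - 2 / b)) := by
    simp only [hG, hg, not_le.2 hR, if_false]
    rw [div_self (ne_of_gt hR), Real.log_one]
    ring_nf
  have hG0 : G 0 = 0 := by simp [hG]
  rw [hGR, hG0]
  have hsymm : 1 - gaussQ (a - 2 / b) = gaussQ ((2 - a * b) / b) := by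
    rw [show (2 - a * b) / b = -(a - 2/b) by field_simp; ring, gaussQ_neg]
  rw [sub_zero]
  rw [show R ^ 2 / 2 * gaussQ a + R ^ 2 / 2 * Real.exp K * (1 - gaussQ (a - 2 / b)) =
    R ^ 2 / 2 * (gaussQ a + Real.exp K * (1 - gaussQ (a - 2 / b))) by ring, hsymm]
  field_simp
end

section
/- Let 0 ≤ R₁ < R₂, let a, b be reals with b > 0, and define C(a,b) = Q(a) + exp((2-2ab)/b²)·Q((2-ab)/b). If R is a random variable on [R₁,R₂] with density f(r) = 2r/(R₂² - R₁²), then E[1 - Q(a + b·ln(R/R_c))] = 1 - (1/(R₂² - R₁²))·[R₂²·C(a₂, b) - R₁²·C(a₁, b)], where a₂ = a + b·ln(R₂/R_c) and a₁ = a + b·ln(R₁/R_c), for any R_c > 0. -/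
open MeasureTheory

/-- `C(a,b) = Q(a) + exp((2-2ab)/b²) Q((2-ab)/b)`. -/
noncomputable def gaussC (a b : ℝ) : ℝ :=
  gaussQ a + Real.exp ((2 - 2 * a * b) / b ^ 2) * gaussQ ((2 - a * b) / b)

open Real Set Filter Topology intervalIntegral

namespace SirAux

lemma f_int : Integrable (fun t : ℝ => Real.exp (-t ^ 2 / 2)) := by
  have h := integrable_exp_neg_mul_sq (by norm_num : (0:ℝ) < 1/2)
  have : (fun t : ℝ => Real.exp (-t ^ 2 / 2)) = fun t : ℝ => Real.exp (-(1/2) * t ^ 2) := by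
    funext t; congr 1; ring
  rw [this]; exact h

lemma f_cont : Continuous (fun t : ℝ => Real.exp (-t ^ 2 / 2)) := by fun_prop

lemma gaussQ_eq (x : ℝ) :
    gaussQ x = gaussQ 0 - (1 / Real.sqrt (2 * Real.pi)) * ∫ t in (0:ℝ)..x, Real.exp (-t ^ 2 / 2) := by
  have h1 := intervalIntegral.integral_Iic_add_Ioi (f_int.integrableOn (s := Iic x))
      (f_int.integrableOn (s := Ioi x))
  have h2 := intervalIntegral.integral_Iic_add_Ioi (f_int.integrableOn (s := Iic (0:ℝ)))
      (f_int.integrableOn (s := Ioi (0:ℝ)))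
  have h3 := intervalIntegral.integral_Iic_sub_Iic (f_int.integrableOn (s := Iic (0:ℝ)))
      (f_int.integrableOn (s := Iic x))
  simp only [gaussQ]
  rw [← h3]
  linarith [congrArg (fun z => (1 / Real.sqrt (2 * Real.pi)) * z) (h1.trans h2.symm)]

lemma gaussQ_hasDerivAt (x : ℝ) :
    HasDerivAt gaussQ (-((1 / Real.sqrt (2 * Real.pi)) * Real.exp (-x ^ 2 / 2))) x := by
  have h1 : HasDerivAt (fun y => ∫ t in (0:ℝ)..y, Real.exp (-t ^ 2 / 2))
      (Real.exp (-x ^ 2 / 2)) x :=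
    intervalIntegral.integral_hasDerivAt_right (f_int.intervalIntegrable)
      f_cont.aestronglyMeasurable.stronglyMeasurableAtFilter f_cont.continuousAt
  have h2 := (h1.const_mul (1 / Real.sqrt (2 * Real.pi))).const_sub (gaussQ 0)
  have heq : (fun y => gaussQ 0 - (1 / Real.sqrt (2 * Real.pi)) * ∫ t in (0:ℝ)..y,
      Real.exp (-t ^ 2 / 2)) = gaussQ := by
    funext y; exact (gaussQ_eq y).symm
  rw [heq] at h2
  exact h2

lemma gaussQ_cont : Continuous gaussQ :=
  Differentiable.continuous (fun x => (gaussQ_hasDerivAt x).differentiableAt)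

lemma gaussQ_nonneg (x : ℝ) : 0 ≤ gaussQ x := by
  apply mul_nonneg
  · positivity
  · exact setIntegral_nonneg measurableSet_Ioi fun t _ => (Real.exp_pos _).le

lemma gaussQ_le_one (x : ℝ) : gaussQ x ≤ 1 := by
  have hs : Real.sqrt (2 * Real.pi) > 0 := Real.sqrt_pos.2 (by positivity)
  have h1 : (∫ t in Set.Ioi x, Real.exp (-t ^ 2 / 2)) ≤ ∫ t : ℝ, Real.exp (-t ^ 2 / 2) :=
    setIntegral_le_integral f_int (Filter.Eventually.of_forall fun t => (Real.exp_pos _).le)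
  have h2 : (∫ t : ℝ, Real.exp (-t ^ 2 / 2)) = Real.sqrt (2 * Real.pi) := by
    have : (fun t : ℝ => Real.exp (-t ^ 2 / 2)) = fun t : ℝ => Real.exp (-(1/2) * t ^ 2) := by
      funext t; congr 1; ring
    rw [this, integral_gaussian]
    congr 1; rw [div_div_eq_mul_div]; ring_nf
  calc gaussQ x ≤ (1 / Real.sqrt (2 * Real.pi)) * Real.sqrt (2 * Real.pi) := by
        unfold gaussQ
        rw [← h2]
        exact mul_le_mul_of_nonneg_left h1 (by positivity)
    _ = 1 := by field_simp

lemma gaussQ_tendsto_zero : Tendsto gaussQ atTop (𝓝 0) := by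
  have h := MeasureTheory.intervalIntegral_tendsto_integral_Ioi (0:ℝ)
    (f_int.integrableOn (s := Ioi 0)) tendsto_id
  have h2 : Tendsto (fun x => gaussQ 0 - (1 / Real.sqrt (2 * Real.pi)) *
      ∫ t in (0:ℝ)..x, Real.exp (-t ^ 2 / 2)) atTop
      (𝓝 (gaussQ 0 - (1 / Real.sqrt (2 * Real.pi)) * ∫ t in Set.Ioi (0:ℝ), Real.exp (-t ^ 2 / 2))) :=
    (tendsto_const_nhds.sub ((h.const_mul _)))
  have : gaussQ 0 - (1 / Real.sqrt (2 * Real.pi)) * ∫ t in Set.Ioi (0:ℝ), Real.exp (-t ^ 2 / 2) = 0 := by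
    unfold gaussQ; ring
  rw [this] at h2
  exact h2.congr fun x => (gaussQ_eq x).symm


lemma gaussC_hasDerivAt (b : ℝ) (hb : 0 < b) (x : ℝ) :
    HasDerivAt (fun α => gaussC α b)
      (-(2 / b) * (Real.exp ((2 - 2 * x * b) / b ^ 2) * gaussQ ((2 - x * b) / b))) x := by
  have hb' : b ≠ 0 := hb.ne'
  have hu : HasDerivAt (fun α : ℝ => (2 - 2 * α * b) / b ^ 2) (-(2 / b)) x := by
    have h := ((hasDerivAt_id x).const_mul (-(2/b))).add_const (2 / b ^ 2)
    have heq : (fun α : ℝ => -(2/b) * α + 2 / b ^ 2) = fun α : ℝ => (2 - 2 * α * b) / b ^ 2 := by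
      funext y; field_simp; ring
    simp only [id_eq] at h; rw [heq] at h; simpa using h
  have hv : HasDerivAt (fun α : ℝ => (2 - α * b) / b) (-1 : ℝ) x := by
    have h := ((hasDerivAt_id x).const_mul (-1 : ℝ)).add_const (2 / b)
    have heq : (fun α : ℝ => (-1 : ℝ) * α + 2 / b) = fun α : ℝ => (2 - α * b) / b := by
      funext y; field_simp; ring
    simp only [id_eq] at h; rw [heq] at h; simpa using h
  have hE : HasDerivAt (fun α : ℝ => Real.exp ((2 - 2 * α * b) / b ^ 2))
      (Real.exp ((2 - 2 * x * b) / b ^ 2) * (-(2 / b))) x := hu.exp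
  have hQv := (gaussQ_hasDerivAt ((2 - x * b) / b)).comp x hv
  simp only [Function.comp_def] at hQv
  have hsum := (gaussQ_hasDerivAt x).add (hE.mul hQv)
  have key : Real.exp ((2 - 2 * x * b) / b ^ 2) * Real.exp (-((2 - x * b) / b) ^ 2 / 2)
      = Real.exp (-x ^ 2 / 2) := by
    rw [← Real.exp_add]; congr 1; field_simp; ring
  refine HasDerivAt.congr_deriv (f := fun α => gaussC α b) hsum ?_
  linear_combination (1 / Real.sqrt (2 * Real.pi)) * key

lemma F_hasDerivAt (a b Rc : ℝ) (hb : 0 < b) (hRc : 0 < Rc) {r : ℝ} (hr : 0 < r) :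
    HasDerivAt (fun s => s ^ 2 * gaussC (a + b * Real.log (s / Rc)) b)
      (2 * r * gaussQ (a + b * Real.log (r / Rc))) r := by
  have hb' : b ≠ 0 := hb.ne'
  have hα : HasDerivAt (fun s : ℝ => a + b * Real.log (s / Rc)) (b / r) r := by
    have h := ((Real.hasDerivAt_log hr.ne').const_mul b).const_add (a - b * Real.log Rc)
    have h2 : HasDerivAt (fun s : ℝ => a + b * Real.log (s / Rc)) (b * r⁻¹) r := by
      apply h.congr_of_eventuallyEq
      filter_upwards [Ioi_mem_nhds hr] with s hs
      rw [Real.log_div (ne_of_gt hs) hRc.ne']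
      ring
    simpa [div_eq_mul_inv] using h2
  have hC := gaussC_hasDerivAt b hb (a + b * Real.log (r / Rc))
  have hCα := HasDerivAt.comp r hC hα
  have hF := (hasDerivAt_pow 2 r).mul hCα
  refine HasDerivAt.congr_deriv (f := fun s => s ^ 2 * gaussC (a + b * Real.log (s / Rc)) b) hF ?_
  symm
  simp only [Function.comp_apply, gaussC]
  push_cast
  field_simp
  ring

lemma g_intervalIntegrable (a b Rc : ℝ) (x y : ℝ) :
    IntervalIntegrable (fun r => 2 * r * gaussQ (a + b * Real.log (r / Rc))) volume x y := by
  have hm : Measurable fun r : ℝ => 2 * r * gaussQ (a + b * Real.log (r / Rc)) := by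
    apply Measurable.mul
    · exact measurable_const.mul measurable_id
    · exact gaussQ_cont.measurable.comp
        (measurable_const.add (measurable_const.mul (Real.measurable_log.comp
          (measurable_id.div_const Rc))))
  rw [intervalIntegrable_iff]
  apply Integrable.mono' (g := fun _ => 2 * (max |x| |y|))
      (integrableOn_const measure_Ioc_lt_top.ne)
      hm.aestronglyMeasurable.restrict
  filter_upwards [ae_restrict_mem measurableSet_uIoc] with r hr
  have h1 : |r| ≤ max |x| |y| := by
    have h2 := abs_le_max_abs_abs hr.1.le hr.2
    rcases le_total x y with h | h
    · simpa [min_eq_left h, max_eq_right h] using h2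
    · rw [max_comm]
      simpa [min_eq_right h, max_eq_left h] using h2
  calc |2 * r * gaussQ (a + b * Real.log (r / Rc))|
      = 2 * |r| * |gaussQ (a + b * Real.log (r / Rc))| := by
        rw [abs_mul, abs_mul]; norm_num
    _ ≤ 2 * (max |x| |y|) * 1 := by
        apply mul_le_mul
        · exact mul_le_mul_of_nonneg_left h1 (by norm_num)
        · rw [abs_of_nonneg (gaussQ_nonneg _)]; exact gaussQ_le_one _
        · exact abs_nonneg _
        · positivity
    _ = 2 * (max |x| |y|) := by ring

lemma integral_g (a b Rc : ℝ) (hb : 0 < b) (hRc : 0 < Rc) {x y : ℝ} (hx : 0 < x)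
    (hxy : x ≤ y) :
    ∫ r in x..y, 2 * r * gaussQ (a + b * Real.log (r / Rc)) =
      y ^ 2 * gaussC (a + b * Real.log (y / Rc)) b -
        x ^ 2 * gaussC (a + b * Real.log (x / Rc)) b := by
  apply intervalIntegral.integral_eq_sub_of_hasDerivAt
  · intro t ht
    rw [Set.uIcc_of_le hxy] at ht
    exact F_hasDerivAt a b Rc hb hRc (lt_of_lt_of_le hx ht.1)
  · exact g_intervalIntegrable a b Rc x y

lemma tendsto_F_zero (a b Rc : ℝ) (hb : 0 < b) (hRc : 0 < Rc) :
    Tendsto (fun ε : ℝ => ε ^ 2 * gaussC (a + b * Real.log (ε / Rc)) b) (𝓝[>] 0) (𝓝 0) := by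
  have hb' : b ≠ 0 := hb.ne'
  have hsq : Tendsto (fun ε : ℝ => ε ^ 2) (𝓝[>] 0) (𝓝 0) := by
    have := (continuous_pow 2).tendsto (0 : ℝ)
    simpa using this.mono_left nhdsWithin_le_nhds
  have h1 : Tendsto (fun ε : ℝ => ε ^ 2 * gaussQ (a + b * Real.log (ε / Rc))) (𝓝[>] 0) (𝓝 0) := by
    apply squeeze_zero' (g := fun ε : ℝ => ε ^ 2)
    · filter_upwards with ε
      exact mul_nonneg (sq_nonneg ε) (gaussQ_nonneg _)
    · filter_upwards with ε
      calc ε ^ 2 * gaussQ (a + b * Real.log (ε / Rc)) ≤ ε ^ 2 * 1 :=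
            mul_le_mul_of_nonneg_left (gaussQ_le_one _) (sq_nonneg ε)
        _ = ε ^ 2 := by ring
    · exact hsq
  have hL : Tendsto (fun ε : ℝ => Real.log (ε / Rc)) (𝓝[>] 0) atBot := by
    apply Real.tendsto_log_nhdsGT_zero.comp
    apply tendsto_nhdsWithin_of_tendsto_nhds_of_eventually_within
    · have : Tendsto (fun ε : ℝ => ε / Rc) (𝓝 0) (𝓝 (0 / Rc)) :=
        (continuous_id.div_const Rc).tendsto 0
      simpa using this.mono_left nhdsWithin_le_nhds
    · filter_upwards [self_mem_nhdsWithin] with ε (hε : 0 < ε)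
      exact div_pos hε hRc
  have hv : Tendsto (fun ε : ℝ => (2 - (a + b * Real.log (ε / Rc)) * b) / b) (𝓝[>] 0) atTop := by
    have h2 := tendsto_atTop_add_const_right _ ((2 - a * b) / b)
      (hL.atBot_mul_const_of_neg (neg_neg_iff_pos.2 hb : -b < 0))
    apply h2.congr
    intro ε
    field_simp
    ring
  have h2 : Tendsto (fun ε : ℝ => ε ^ 2 *
      (Real.exp ((2 - 2 * (a + b * Real.log (ε / Rc)) * b) / b ^ 2) *
        gaussQ ((2 - (a + b * Real.log (ε / Rc)) * b) / b))) (𝓝[>] 0) (𝓝 0) := by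
    have hK : Tendsto (fun ε : ℝ => (Rc ^ 2 * Real.exp ((2 - 2 * a * b) / b ^ 2)) *
        gaussQ ((2 - (a + b * Real.log (ε / Rc)) * b) / b)) (𝓝[>] 0)
        (𝓝 ((Rc ^ 2 * Real.exp ((2 - 2 * a * b) / b ^ 2)) * 0)) :=
      (gaussQ_tendsto_zero.comp hv).const_mul _
    rw [mul_zero] at hK
    apply hK.congr'
    filter_upwards [self_mem_nhdsWithin] with ε (hε : 0 < ε)
    have hεRc : 0 < ε / Rc := div_pos hε hRc
    have hexp : Real.exp ((2 - 2 * (a + b * Real.log (ε / Rc)) * b) / b ^ 2)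
        = Real.exp ((2 - 2 * a * b) / b ^ 2) * (Real.exp (Real.log (ε / Rc)))⁻¹ *
          (Real.exp (Real.log (ε / Rc)))⁻¹ := by
      rw [← Real.exp_neg, ← Real.exp_add, ← Real.exp_add]
      congr 1
      field_simp
      ring
    rw [hexp, Real.exp_log hεRc]
    field_simp
  have hfinal := h1.add h2
  rw [add_zero] at hfinal
  apply hfinal.congr
  intro ε
  simp only [gaussC]
  ring

end SirAux

/-- Lemma 1: the spatially averaged SIR outage probability over an annulus with inner
radius `R₁` and outer radius `R₂`, for a user at area-uniform random distance `R`. -/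
theorem stmt_5 (R₁ R₂ Rc a b : ℝ) (h₁ : 0 ≤ R₁) (h₁₂ : R₁ < R₂) (hb : 0 < b)
    (hRc : 0 < Rc) :
    ∫ r in R₁..R₂,
        (1 - gaussQ (a + b * Real.log (r / Rc))) * (2 * r / (R₂ ^ 2 - R₁ ^ 2)) =
      1 - (1 / (R₂ ^ 2 - R₁ ^ 2)) *
        (R₂ ^ 2 * gaussC (a + b * Real.log (R₂ / Rc)) b -
          R₁ ^ 2 * gaussC (a + b * Real.log (R₁ / Rc)) b) := by
  have hR₂ : 0 < R₂ := lt_of_le_of_lt h₁ h₁₂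
  have hD : (0:ℝ) < R₂ ^ 2 - R₁ ^ 2 := by nlinarith
  have key : ∫ r in R₁..R₂, 2 * r * gaussQ (a + b * Real.log (r / Rc)) =
      R₂ ^ 2 * gaussC (a + b * Real.log (R₂ / Rc)) b -
        R₁ ^ 2 * gaussC (a + b * Real.log (R₁ / Rc)) b := by
    rcases eq_or_lt_of_le h₁ with h0 | h0
    · -- R₁ = 0
      have hcont : Continuous fun x => ∫ t in R₂..x, 2 * t * gaussQ (a + b * Real.log (t / Rc)) :=
        intervalIntegral.continuous_primitive (fun x y => SirAux.g_intervalIntegrable a b Rc x y) R₂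
      have T1 : Tendsto (fun ε : ℝ => ∫ r in ε..R₂, 2 * r * gaussQ (a + b * Real.log (r / Rc)))
          (𝓝[>] 0) (𝓝 (∫ r in (0:ℝ)..R₂, 2 * r * gaussQ (a + b * Real.log (r / Rc)))) := by
        have := hcont.tendsto 0
        have hneg : Tendsto (fun ε : ℝ => -∫ t in R₂..ε, 2 * t * gaussQ (a + b * Real.log (t / Rc)))
            (𝓝 0) (𝓝 (-∫ t in R₂..(0:ℝ), 2 * t * gaussQ (a + b * Real.log (t / Rc)))) := this.neg
        have heq : ∀ x : ℝ, -∫ t in R₂..x, 2 * t * gaussQ (a + b * Real.log (t / Rc)) =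
            ∫ t in x..R₂, 2 * t * gaussQ (a + b * Real.log (t / Rc)) := fun x => by
          rw [intervalIntegral.integral_symm x R₂, neg_neg]
        simp only [heq] at hneg
        exact hneg.mono_left nhdsWithin_le_nhds
      have T2 : Tendsto (fun ε : ℝ => ∫ r in ε..R₂, 2 * r * gaussQ (a + b * Real.log (r / Rc)))
          (𝓝[>] 0) (𝓝 (R₂ ^ 2 * gaussC (a + b * Real.log (R₂ / Rc)) b - 0)) := by
        have := (tendsto_const_nhds (x := R₂ ^ 2 * gaussC (a + b * Real.log (R₂ / Rc)) b)
            (f := 𝓝[>] (0:ℝ))).sub (SirAux.tendsto_F_zero a b Rc hb hRc)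
        apply this.congr'
        filter_upwards [self_mem_nhdsWithin, eventually_nhdsWithin_of_eventually_nhds
          (eventually_lt_nhds hR₂)] with ε (hε : 0 < ε) hε2
        exact (SirAux.integral_g a b Rc hb hRc hε hε2.le).symm
      have h00 := tendsto_nhds_unique T1 T2
      rw [← h0, h00]
      ring
    · exact SirAux.integral_g a b Rc hb hRc h0 h₁₂.le
  have hsplit : ∀ r : ℝ, (1 - gaussQ (a + b * Real.log (r / Rc))) * (2 * r / (R₂ ^ 2 - R₁ ^ 2)) =
      2 * r / (R₂ ^ 2 - R₁ ^ 2) -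
        (1 / (R₂ ^ 2 - R₁ ^ 2)) * (2 * r * gaussQ (a + b * Real.log (r / Rc))) := by
    intro r; ring
  simp only [hsplit]
  rw [intervalIntegral.integral_sub]
  · rw [intervalIntegral.integral_const_mul, key]
    have hrw : ∀ r : ℝ, 2 * r / (R₂ ^ 2 - R₁ ^ 2) = (2 / (R₂ ^ 2 - R₁ ^ 2)) * r :=
      fun r => by ring
    simp only [hrw]
    rw [intervalIntegral.integral_const_mul, integral_id]
    field_simp
  · apply Continuous.intervalIntegrable
    fun_prop
  · exact (SirAux.g_intervalIntegrable a b Rc R₁ R₂).const_mul _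
end
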